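/- For a Poisson binomial random variable Z (a sum of independent Bernoulli random variables with possibly different success probabilities p_1,...,p_n ∈ (0,1)), the probability mass function is strictly log-concave on its support: P(Z=k+1)·P(Z=k-1) < (P(Z=k))^2 for all k with 1 ≤ k ≤ n-1. -/

import Mathlib

open Finset

variable {ι : Type*} [DecidableEq ι]

noncomputable def pbW (p : ι → ℝ) (s : Finset ι) (k : ℕ) : ℝ :=
  ∑ S ∈ s.powersetCard k, (∏ i ∈ S, p i) * ∏ i ∈ s \ S, (1 - p i)

lemma pbW_nonneg (p : ι → ℝ) (hp : ∀ i, 0 < p i ∧ p i < 1) (s : Finset ι) (k : ℕ) :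
    0 ≤ pbW p s k :=
  Finset.sum_nonneg fun S _ =>
    mul_nonneg (Finset.prod_nonneg fun i _ => (hp i).1.le)
      (Finset.prod_nonneg fun i _ => by linarith [(hp i).2])

lemma pbW_pos (p : ι → ℝ) (hp : ∀ i, 0 < p i ∧ p i < 1) (s : Finset ι) {k : ℕ}
    (hk : k ≤ s.card) : 0 < pbW p s k := by
  refine Finset.sum_pos (fun S _ => ?_) (powersetCard_nonempty.2 hk)
  exact mul_pos (Finset.prod_pos fun i _ => (hp i).1)
    (Finset.prod_pos fun i _ => by linarith [(hp i).2])

lemma pbW_eq_zero (p : ι → ℝ) (s : Finset ι) {k : ℕ} (hk : s.card < k) :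
    pbW p s k = 0 := by
  rw [pbW, powersetCard_eq_empty.2 hk, Finset.sum_empty]

lemma pbW_rec (p : ι → ℝ) {a : ι} {s : Finset ι} (ha : a ∉ s) (k : ℕ) :
    pbW p (insert a s) (k + 1) = p a * pbW p s k + (1 - p a) * pbW p s (k + 1) := by
  rw [pbW, powersetCard_succ_insert ha, Finset.sum_union, add_comm]
  · congr 1
    · rw [Finset.sum_image, pbW, Finset.mul_sum]
      · refine Finset.sum_congr rfl fun S hS => ?_
        rw [mem_powersetCard] at hS
        have haS : a ∉ S := fun h => ha (hS.1 h)
        have hsd : insert a s \ insert a S = s \ S := by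
          ext x
          simp only [Finset.mem_sdiff, Finset.mem_insert]
          constructor
          · rintro ⟨h1 | h1, h2⟩
            · exact absurd (Or.inl h1) h2
            · exact ⟨h1, fun h => h2 (Or.inr h)⟩
          · rintro ⟨h1, h2⟩
            exact ⟨Or.inr h1, fun h => by
              rcases h with h | h
              · exact ha (h ▸ h1)
              · exact h2 h⟩
        rw [hsd, Finset.prod_insert haS]
        ring
      · intro S hS T hT hST
        rw [Finset.mem_coe, mem_powersetCard] at hS hT
        have haS : a ∉ S := fun h => ha (hS.1 h)
        have haT : a ∉ T := fun h => ha (hT.1 h)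
        rw [← Finset.erase_insert haS, ← Finset.erase_insert haT, hST]
    · rw [pbW, Finset.mul_sum]
      refine Finset.sum_congr rfl fun S hS => ?_
      rw [mem_powersetCard] at hS
      have haS : a ∉ S := fun h => ha (hS.1 h)
      rw [Finset.insert_sdiff_of_notMem _ haS,
        Finset.prod_insert (by simp [Finset.mem_sdiff, ha])]
      ring
  · rw [Finset.disjoint_left]
    rintro S h1 h2
    rw [mem_powersetCard] at h1
    rw [Finset.mem_image] at h2
    obtain ⟨T, _, rfl⟩ := h2
    exact ha (h1.1 (Finset.mem_insert_self a T))

lemma pbW_zero (p : ι → ℝ) {a : ι} {s : Finset ι} (ha : a ∉ s) :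
    pbW p (insert a s) 0 = (1 - p a) * pbW p s 0 := by
  simp only [pbW, powersetCard_zero, Finset.sum_singleton, Finset.prod_empty, one_mul,
    Finset.sdiff_empty]
  rw [Finset.prod_insert ha]

/-- Strict log-concavity. -/
lemma pbW_strict (p : ι → ℝ) (hp : ∀ i, 0 < p i ∧ p i < 1) (s : Finset ι) :
    ∀ t : ℕ, t + 1 ≤ s.card → pbW p s (t + 2) * pbW p s t < pbW p s (t + 1) ^ 2 := by
  induction s using Finset.induction_on with
  | empty => intro t ht; simp at ht
  | insert a s ha IH =>
    -- nonstrict log-concavity for s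
    have nonstrict : ∀ t : ℕ, pbW p s (t + 2) * pbW p s t ≤ pbW p s (t + 1) ^ 2 := by
      intro t
      by_cases h : t + 1 ≤ s.card
      · exact (IH t h).le
      · push_neg at h
        rw [pbW_eq_zero p s (by omega)]
        simpa using sq_nonneg (pbW p s (t + 1))
    -- cross inequality for s
    have cross : ∀ t : ℕ, pbW p s (t + 3) * pbW p s t ≤ pbW p s (t + 1) * pbW p s (t + 2) := by
      intro t
      by_cases h1 : pbW p s (t + 1) = 0
      · have hc : s.card < t + 1 := by
          by_contra hc
          exact absurd h1 (ne_of_gt (pbW_pos p hp s (by omega)))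
        rw [pbW_eq_zero p s (by omega)]
        rw [h1]
        simp
      · by_cases h2 : pbW p s (t + 2) = 0
        · have hc : s.card < t + 2 := by
            by_contra hc
            exact absurd h2 (ne_of_gt (pbW_pos p hp s (by omega)))
          rw [pbW_eq_zero p s (by omega), h2]
          simp [pbW_nonneg p hp]
        · have hp1 : 0 < pbW p s (t + 1) :=
            (pbW_nonneg p hp s (t + 1)).lt_of_ne (Ne.symm h1)
          have hp2 : 0 < pbW p s (t + 2) :=
            (pbW_nonneg p hp s (t + 2)).lt_of_ne (Ne.symm h2)
          have A := nonstrict t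
          have B := nonstrict (t + 1)
          have h3 : 0 ≤ pbW p s (t + 3) := pbW_nonneg p hp s (t + 3)
          have h0 : 0 ≤ pbW p s t := pbW_nonneg p hp s t
          nlinarith [mul_le_mul A B (by positivity) (sq_nonneg _)]
    intro t ht
    rw [Finset.card_insert_of_notMem ha] at ht
    have hpa := hp a
    rcases t with _ | u
    · -- t = 0
      rw [pbW_zero p ha, pbW_rec p ha 0, pbW_rec p ha 1]
      have b0 : 0 < pbW p s 0 := pbW_pos p hp s (Nat.zero_le _)
      have b1 : 0 ≤ pbW p s 1 := pbW_nonneg p hp s 1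
      have b2 : 0 ≤ pbW p s 2 := pbW_nonneg p hp s 2
      have hns := nonstrict 0
      have q1 : 0 < 1 - p a := by linarith [hpa.2]
      norm_num at hns ⊢
      nlinarith [mul_pos (mul_pos hpa.1 hpa.1) (mul_pos b0 b0),
        mul_nonneg (mul_nonneg hpa.1.le q1.le) (mul_nonneg b0.le b1),
        mul_nonneg (mul_nonneg q1.le q1.le) (sub_nonneg.2 hns)]
    · -- t = u + 1
      rw [pbW_rec p ha (u + 2), pbW_rec p ha (u + 1), pbW_rec p ha u]
      have hstrict : pbW p s (u + 2) * pbW p s u < pbW p s (u + 1) ^ 2 := IH u (by omega)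
      have hns : pbW p s (u + 3) * pbW p s (u + 1) ≤ pbW p s (u + 2) ^ 2 := nonstrict (u + 1)
      have hcr := cross u
      have q1 : 0 < 1 - p a := by linarith [hpa.2]
      have e1 : u + 1 + 1 = u + 2 := rfl
      have e2 : u + 2 + 1 = u + 3 := rfl
      rw [e1, e2]
      nlinarith [mul_pos (mul_pos hpa.1 hpa.1) (sub_pos.2 hstrict),
        mul_nonneg (mul_nonneg q1.le q1.le) (sub_nonneg.2 hns),
        mul_nonneg (mul_nonneg hpa.1.le q1.le) (sub_nonneg.2 hcr)]

/-- PMF of a Poisson binomial random variable: the sum of `n` independent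
Bernoulli random variables with success probabilities `p i`. -/
noncomputable def poissonBinomPMF (n : ℕ) (p : Fin n → ℝ) (k : ℕ) : ℝ :=
  ∑ S ∈ Finset.univ.powersetCard k, (∏ i ∈ S, p i) * ∏ i ∈ Sᶜ, (1 - p i)

lemma poissonBinomPMF_eq (n : ℕ) (p : Fin n → ℝ) (k : ℕ) :
    poissonBinomPMF n p k = pbW p Finset.univ k := by
  unfold poissonBinomPMF pbW
  refine Finset.sum_congr rfl fun S _ => ?_
  rw [Finset.compl_eq_univ_sdiff]

theorem stmt5 (n : ℕ) (p : Fin n → ℝ) (hp : ∀ i, 0 < p i ∧ p i < 1) :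
    ∀ k : ℕ, 1 ≤ k → k + 1 ≤ n →
      poissonBinomPMF n p (k + 1) * poissonBinomPMF n p (k - 1)
        < (poissonBinomPMF n p k) ^ 2 := by
  intro k hk1 hkn
  obtain ⟨t, rfl⟩ : ∃ t, k = t + 1 := ⟨k - 1, by omega⟩
  simp only [poissonBinomPMF_eq, Nat.add_sub_cancel]
  have := pbW_strict p hp Finset.univ t (by simp [Finset.card_univ]; omega)
  exact this
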